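/- Let δ be the 2n×2n block matrix (blocks of sizes r,m,m,r,m,m) δ = [[1_r,0,0,0,0,0],[0,1_m,0,0,0,0],[0,0,1_m,0,0,0],[0,0,0,1_r,0,0],[0,0,-1_m,0,1_m,0],[0,ε·1_m,0,0,0,1_m]]. Then for every g ∈ G(Φ), the matrix δ·ι(g,g)·δ^{-1} is block upper triangular of the form [[*,*],[0_n,*]] (i.e., lies in the Siegel parabolic P of H), where ι is the doubling map ι(g₁,g₂) = R·diag(g₁,g₂)·R^{-1}. -/

import Mathlib

open Matrix

namespace Stmt3

variable {D : Type*} [Ring D] [StarRing D]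

/-- Index type for the `(m,r,m)` block decomposition of size `n = 2m+r`. -/
abbrev Bidx (m r : ℕ) := Fin m ⊕ (Fin r ⊕ Fin m)

/-- Index type for the `(r,m,m)` block decomposition of size `n = 2m+r`. -/
abbrev Aidx (m r : ℕ) := Fin r ⊕ (Fin m ⊕ Fin m)

/-- Assemble a 3×3 block matrix with block sizes `(m, r, m)`. -/
def blk3 {m r : ℕ} (a : Matrix (Fin m) (Fin m) D) (f : Matrix (Fin m) (Fin r) D)
    (b : Matrix (Fin m) (Fin m) D) (h : Matrix (Fin r) (Fin m) D)
    (e : Matrix (Fin r) (Fin r) D) (jj : Matrix (Fin r) (Fin m) D)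
    (c : Matrix (Fin m) (Fin m) D) (k : Matrix (Fin m) (Fin r) D)
    (d : Matrix (Fin m) (Fin m) D) : Matrix (Bidx m r) (Bidx m r) D :=
  Matrix.of fun p q => match p, q with
    | Sum.inl i, Sum.inl j => a i j
    | Sum.inl i, Sum.inr (Sum.inl j) => f i j
    | Sum.inl i, Sum.inr (Sum.inr j) => b i j
    | Sum.inr (Sum.inl i), Sum.inl j => h i j
    | Sum.inr (Sum.inl i), Sum.inr (Sum.inl j) => e i j
    | Sum.inr (Sum.inl i), Sum.inr (Sum.inr j) => jj i j
    | Sum.inr (Sum.inr i), Sum.inl j => c i j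
    | Sum.inr (Sum.inr i), Sum.inr (Sum.inl j) => k i j
    | Sum.inr (Sum.inr i), Sum.inr (Sum.inr j) => d i j

/-- Assemble a 3×3 block matrix with row block sizes `(r, m, m)` and column block
sizes `(m, r, m)`. -/
def blk3AB {m r : ℕ} (x11 : Matrix (Fin r) (Fin m) D) (x12 : Matrix (Fin r) (Fin r) D)
    (x13 : Matrix (Fin r) (Fin m) D) (x21 : Matrix (Fin m) (Fin m) D)
    (x22 : Matrix (Fin m) (Fin r) D) (x23 : Matrix (Fin m) (Fin m) D)
    (x31 : Matrix (Fin m) (Fin m) D) (x32 : Matrix (Fin m) (Fin r) D)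
    (x33 : Matrix (Fin m) (Fin m) D) : Matrix (Aidx m r) (Bidx m r) D :=
  Matrix.of fun p q => match p, q with
    | Sum.inl i, Sum.inl j => x11 i j
    | Sum.inl i, Sum.inr (Sum.inl j) => x12 i j
    | Sum.inl i, Sum.inr (Sum.inr j) => x13 i j
    | Sum.inr (Sum.inl i), Sum.inl j => x21 i j
    | Sum.inr (Sum.inl i), Sum.inr (Sum.inl j) => x22 i j
    | Sum.inr (Sum.inl i), Sum.inr (Sum.inr j) => x23 i j
    | Sum.inr (Sum.inr i), Sum.inl j => x31 i j
    | Sum.inr (Sum.inr i), Sum.inr (Sum.inl j) => x32 i j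
    | Sum.inr (Sum.inr i), Sum.inr (Sum.inr j) => x33 i j

/-- The matrix `Φ = [[0,0,1_m],[0,θ,0],[ε·1_m,0,0]]`. -/
def PhiMat {m r : ℕ} (ε : D) (θ : Matrix (Fin r) (Fin r) D) : Matrix (Bidx m r) (Bidx m r) D :=
  blk3 0 0 1 0 θ 0 (ε • 1) 0 0

/-- The matrix `J_n = [[0,1_n],[ε·1_n,0]]` in the `(r,m,m)` basis. -/
def Jmat (m r : ℕ) (ε : D) : Matrix (Aidx m r ⊕ Aidx m r) (Aidx m r ⊕ Aidx m r) D :=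
  fromBlocks 0 1 (ε • 1) 0

/-- The explicit change-of-basis matrix `R` of the doubling method, with row blocks
of sizes `(r,m,m,r,m,m)` and column blocks of sizes `(m,r,m,m,r,m)`. -/
def Rmat {m r : ℕ} (ε : D) (θ : Matrix (Fin r) (Fin r) D) [Invertible (2 : D)]
    [Invertible θ] : Matrix (Aidx m r ⊕ Aidx m r) (Bidx m r ⊕ Bidx m r) D :=
  fromBlocks
    (blk3AB 0 ((⅟(2:D) * ε) • 1) 0 0 0 0 1 0 0)
    (blk3AB 0 ((⅟(2:D) * ε) • 1) 0 0 0 (-(ε • 1)) 0 0 0)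
    (blk3AB 0 (⅟θ) 0 0 0 0 0 0 1)
    (blk3AB 0 (-(⅟θ)) 0 1 0 0 0 0 0)

/-- Assemble a 3×3 block matrix with block sizes `(r, m, m)`. -/
def blk3A {m r : ℕ} (x11 : Matrix (Fin r) (Fin r) D) (x12 : Matrix (Fin r) (Fin m) D)
    (x13 : Matrix (Fin r) (Fin m) D) (x21 : Matrix (Fin m) (Fin r) D)
    (x22 : Matrix (Fin m) (Fin m) D) (x23 : Matrix (Fin m) (Fin m) D)
    (x31 : Matrix (Fin m) (Fin r) D) (x32 : Matrix (Fin m) (Fin m) D)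
    (x33 : Matrix (Fin m) (Fin m) D) : Matrix (Aidx m r) (Aidx m r) D :=
  Matrix.of fun p q => match p, q with
    | Sum.inl i, Sum.inl j => x11 i j
    | Sum.inl i, Sum.inr (Sum.inl j) => x12 i j
    | Sum.inl i, Sum.inr (Sum.inr j) => x13 i j
    | Sum.inr (Sum.inl i), Sum.inl j => x21 i j
    | Sum.inr (Sum.inl i), Sum.inr (Sum.inl j) => x22 i j
    | Sum.inr (Sum.inl i), Sum.inr (Sum.inr j) => x23 i j
    | Sum.inr (Sum.inr i), Sum.inl j => x31 i j
    | Sum.inr (Sum.inr i), Sum.inr (Sum.inl j) => x32 i j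
    | Sum.inr (Sum.inr i), Sum.inr (Sum.inr j) => x33 i j

/-- The matrix `δ` of the doubling method: the identity except for the blocks
`-1_m` in position (5,3) and `ε·1_m` in position (6,2), with block sizes
`(r,m,m,r,m,m)`. -/
def deltaMat {m r : ℕ} (ε : D) :
    Matrix (Aidx m r ⊕ Aidx m r) (Aidx m r ⊕ Aidx m r) D :=
  fromBlocks 1 0 (blk3A 0 0 0 0 0 (-1) 0 (ε • 1) 0) 1


section Aux
variable {D : Type*} [Ring D]

lemma fromRows_add' {m₁ m₂ n₁ : Type*} (A C : Matrix m₁ n₁ D) (B E : Matrix m₂ n₁ D) :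
    fromRows A B + fromRows C E = fromRows (A + C) (B + E) := by
  ext (i|i) j <;> rfl

lemma fromColumns_add' {m₁ n₁ n₂ : Type*} (A C : Matrix m₁ n₁ D) (B E : Matrix m₁ n₂ D) :
    fromCols A B + fromCols C E = fromCols (A + C) (B + E) := by
  ext i (j|j) <;> rfl

lemma fromRows_zero' {m₁ m₂ n₁ : Type*} : (fromRows 0 0 : Matrix (m₁ ⊕ m₂) n₁ D) = 0 := by
  ext (i|i) j <;> rfl

lemma fromColumns_zero' {m₁ n₁ n₂ : Type*} : (fromCols 0 0 : Matrix m₁ (n₁ ⊕ n₂) D) = 0 := by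
  ext i (j|j) <;> rfl

lemma fromRows_neg' {m₁ m₂ n₁ : Type*} (A : Matrix m₁ n₁ D) (B : Matrix m₂ n₁ D) :
    -fromRows A B = fromRows (-A) (-B) := by
  ext (i|i) j <;> rfl

lemma fromColumns_neg' {m₁ n₁ n₂ : Type*} (A : Matrix m₁ n₁ D) (B : Matrix m₁ n₂ D) :
    -fromCols A B = fromCols (-A) (-B) := by
  ext i (j|j) <;> rfl


lemma smul_fromRows {m₁ m₂ n₁ : Type*} (a : D) (A : Matrix m₁ n₁ D) (B : Matrix m₂ n₁ D) :
    a • fromRows A B = fromRows (a • A) (a • B) := by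
  ext (i|i) j <;> rfl

lemma smul_fromColumns {m₁ n₁ n₂ : Type*} (a : D) (A : Matrix m₁ n₁ D) (B : Matrix m₁ n₂ D) :
    a • fromCols A B = fromCols (a • A) (a • B) := by
  ext i (j|j) <;> rfl

lemma fromColumns_fromRows_fromRows {m₁ m₂ n₁ n₂ : Type*} (A : Matrix m₁ n₁ D)
    (B : Matrix m₁ n₂ D) (C : Matrix m₂ n₁ D) (E : Matrix m₂ n₂ D) :
    fromCols (fromRows A C) (fromRows B E) = fromBlocks A B C E := by
  ext (i|i) (j|j) <;> rfl

lemma fromColumns_fromRows_zero {m₁ m₂ n₁ n₂ : Type*} (A : Matrix m₁ n₁ D)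
    (C : Matrix m₂ n₁ D) :
    fromCols (fromRows A C) (0 : Matrix (m₁ ⊕ m₂) n₂ D) = fromBlocks A 0 C 0 := by
  ext (i|i) (j|j) <;> rfl

lemma fromColumns_zero_fromRows {m₁ m₂ n₁ n₂ : Type*} (B : Matrix m₁ n₂ D)
    (E : Matrix m₂ n₂ D) :
    fromCols (0 : Matrix (m₁ ⊕ m₂) n₁ D) (fromRows B E) = fromBlocks 0 B 0 E := by
  ext (i|i) (j|j) <;> rfl

lemma fromRows_fromColumns_fromColumns {m₁ m₂ n₁ n₂ : Type*} (A : Matrix m₁ n₁ D)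
    (B : Matrix m₁ n₂ D) (C : Matrix m₂ n₁ D) (E : Matrix m₂ n₂ D) :
    fromRows (fromCols A B) (fromCols C E) = fromBlocks A B C E := by
  ext (i|i) (j|j) <;> rfl

lemma fromRows_fromColumns_zero {m₁ m₂ n₁ n₂ : Type*} (A : Matrix m₁ n₁ D)
    (B : Matrix m₁ n₂ D) :
    fromRows (fromCols A B) (0 : Matrix m₂ (n₁ ⊕ n₂) D) = fromBlocks A B 0 0 := by
  ext (i|i) (j|j) <;> rfl

lemma fromRows_zero_fromColumns {m₁ m₂ n₁ n₂ : Type*} (C : Matrix m₂ n₁ D)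
    (E : Matrix m₂ n₂ D) :
    fromRows (0 : Matrix m₁ (n₁ ⊕ n₂) D) (fromCols C E) = fromBlocks 0 0 C E := by
  ext (i|i) (j|j) <;> rfl

/-- `⅟2` is central. -/
lemma invOf_two_comm [Invertible (2 : D)] (x : D) : x * ⅟(2:D) = ⅟(2:D) * x := by
  have h2 : (2:D) * x = x * (2:D) := by rw [two_mul, mul_two]
  calc x * ⅟(2:D) = ⅟(2:D) * ((2:D) * x) * ⅟(2:D) := by
        rw [← mul_assoc, invOf_mul_self, one_mul]
    _ = ⅟(2:D) * (x * ((2:D) * ⅟(2:D))) := by rw [h2, mul_assoc, mul_assoc]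
    _ = ⅟(2:D) * x := by rw [mul_invOf_self, mul_one]

/-- right-multiplication by an `⅟2`-smul matrix. -/
lemma mul_invOf_two_smul [Invertible (2 : D)] {l n o : Type*} [Fintype n]
    (M : Matrix l n D) (N : Matrix n o D) :
    M * (⅟(2:D) • N) = ⅟(2:D) • (M * N) := by
  ext i j
  simp only [Matrix.mul_apply, Matrix.smul_apply, smul_eq_mul, Finset.mul_sum]
  refine Finset.sum_congr rfl fun k _ => ?_
  rw [← mul_assoc, invOf_two_comm (M i k), mul_assoc]

end Aux

section Blocks
variable {D : Type*} [Ring D] [Invertible (2 : D)] {m r : ℕ}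

omit [Invertible (2 : D)] in
lemma blk3A_eq (x11 : Matrix (Fin r) (Fin r) D) (x12 : Matrix (Fin r) (Fin m) D)
    (x13 : Matrix (Fin r) (Fin m) D) (x21 : Matrix (Fin m) (Fin r) D)
    (x22 : Matrix (Fin m) (Fin m) D) (x23 : Matrix (Fin m) (Fin m) D)
    (x31 : Matrix (Fin m) (Fin r) D) (x32 : Matrix (Fin m) (Fin m) D)
    (x33 : Matrix (Fin m) (Fin m) D) :
    blk3A x11 x12 x13 x21 x22 x23 x31 x32 x33 =
      fromBlocks x11 (fromCols x12 x13) (fromRows x21 x31)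
        (fromBlocks x22 x23 x32 x33) := by
  ext (i|i|i) (j|j|j) <;> rfl

omit [Invertible (2 : D)] in
lemma blk3AB_eq (x11 : Matrix (Fin r) (Fin m) D) (x12 : Matrix (Fin r) (Fin r) D)
    (x13 : Matrix (Fin r) (Fin m) D) (x21 : Matrix (Fin m) (Fin m) D)
    (x22 : Matrix (Fin m) (Fin r) D) (x23 : Matrix (Fin m) (Fin m) D)
    (x31 : Matrix (Fin m) (Fin m) D) (x32 : Matrix (Fin m) (Fin r) D)
    (x33 : Matrix (Fin m) (Fin m) D) :
    blk3AB x11 x12 x13 x21 x22 x23 x31 x32 x33 =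
      fromBlocks x11 (fromCols x12 x13) (fromRows x21 x31)
        (fromBlocks x22 x23 x32 x33) := by
  ext (i|i|i) (j|j|j) <;> rfl

variable (m r) in
/-- first upper block of `δ·R`. -/
def S11mat (ε : D) : Matrix (Aidx m r) (Bidx m r) D :=
  fromBlocks 0 (fromCols ((⅟(2:D) * ε) • 1) 0) (fromRows 0 1) 0

variable (m r) in
/-- second upper block of `δ·R`. -/
def S12mat (ε : D) : Matrix (Aidx m r) (Bidx m r) D :=
  fromBlocks 0 (fromCols ((⅟(2:D) * ε) • 1) 0) 0 (fromBlocks 0 (-(ε • 1)) 0 0)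

variable (m) in
/-- lower block of `δ·R`. -/
def Kmat (θ : Matrix (Fin r) (Fin r) D) [Invertible θ] : Matrix (Aidx m r) (Bidx m r) D :=
  fromBlocks 0 (fromCols (⅟θ) 0) (fromRows (-1) 0) (fromBlocks 0 0 0 1)

variable (m r) in
def Vmat (ε : D) : Matrix (Bidx m r) (Aidx m r) D :=
  fromBlocks 0 (fromCols 0 1) (fromRows (ε • 1) 0) (fromBlocks 0 0 (-(ε • 1)) 0)

variable (m) in
def Wmat (θ : Matrix (Fin r) (Fin r) D) : Matrix (Bidx m r) (Aidx m r) D :=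
  fromBlocks 0 0 (fromRows (⅟(2:D) • θ) 0) (fromBlocks 0 0 0 1)

variable (m) in
def Wmat' (θ : Matrix (Fin r) (Fin r) D) : Matrix (Bidx m r) (Aidx m r) D :=
  fromBlocks 0 (fromCols 1 0) (fromRows (-(⅟(2:D) • θ)) 0) 0

end Blocks

section Comp
set_option maxHeartbeats 2000000
variable {D : Type*} [Ring D] {m r : ℕ} [Invertible (2 : D)]

lemma deltaR_eq (ε : D) (hε : ε = 1 ∨ ε = -1) (θ : Matrix (Fin r) (Fin r) D)
    [Invertible θ] :
    deltaMat (m := m) (r := r) ε * Rmat (m := m) ε θ =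
      fromBlocks (S11mat m r ε) (S12mat m r ε) (Kmat m θ) (-(Kmat m θ)) := by
  rcases hε with rfl | rfl <;>
  · rw [deltaMat, Rmat, blk3A_eq, blk3AB_eq, blk3AB_eq, blk3AB_eq, blk3AB_eq,
      fromBlocks_multiply]
    simp [S11mat, S12mat, Kmat, fromBlocks_multiply, fromRows_mul, mul_fromCols,
      fromCols_mul_fromRows, fromCols_mul_fromBlocks, fromBlocks_mul_fromRows,
      fromRows_mul_fromCols, fromRows_add', fromColumns_add', fromRows_zero',
      fromColumns_zero', fromBlocks_add, Matrix.smul_mul, smul_smul,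
      fromRows_neg', fromColumns_neg', fromBlocks_neg, Matrix.neg_mul, Matrix.mul_neg, mul_one, mul_neg_one, neg_smul]

lemma half_smul_add_half_smul {M : Type*} [AddCommMonoid M] [Module D M]
    (x : M) : ⅟(2:D) • x + ⅟(2:D) • x = x := by
  rw [← add_smul, invOf_two_add_invOf_two, one_smul]

lemma ST_eq (ε : D) (hε : ε = 1 ∨ ε = -1) (θ : Matrix (Fin r) (Fin r) D)
    [Invertible θ] :
    fromBlocks (S11mat m r ε) (S12mat m r ε) (Kmat m θ) (-(Kmat m θ)) *
      fromBlocks (Vmat m r ε) (Wmat m θ) (Vmat m r ε) (Wmat' m θ) = 1 := by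
  rcases hε with rfl | rfl <;>
  · rw [fromBlocks_multiply]
    simp [S11mat, S12mat, Kmat, Vmat, Wmat, Wmat', fromBlocks_multiply, fromRows_mul,
      mul_fromCols, fromCols_mul_fromRows, fromCols_mul_fromBlocks,
      fromBlocks_mul_fromRows, fromRows_mul_fromCols, fromRows_add', fromColumns_add',
      fromRows_zero', fromColumns_zero', fromBlocks_add, Matrix.smul_mul, smul_smul,
      fromRows_neg', fromColumns_neg', fromBlocks_neg, Matrix.neg_mul, Matrix.mul_neg,
      mul_one, mul_neg_one, neg_smul, mul_invOf_two_smul, invOf_mul_self, mul_invOf_self,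
      half_smul_add_half_smul, smul_fromRows, smul_fromColumns, fromColumns_fromRows_fromRows, fromColumns_fromRows_zero, fromColumns_zero_fromRows, fromRows_fromColumns_fromColumns, fromRows_fromColumns_zero, fromRows_zero_fromColumns, ← fromBlocks_one]

lemma TS_eq (ε : D) (hε : ε = 1 ∨ ε = -1) (θ : Matrix (Fin r) (Fin r) D)
    [Invertible θ] :
    fromBlocks (Vmat m r ε) (Wmat m θ) (Vmat m r ε) (Wmat' m θ) *
      fromBlocks (S11mat m r ε) (S12mat m r ε) (Kmat m θ) (-(Kmat m θ)) = 1 := by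
  rcases hε with rfl | rfl <;>
  · rw [fromBlocks_multiply]
    simp [S11mat, S12mat, Kmat, Vmat, Wmat, Wmat', fromBlocks_multiply, fromRows_mul,
      mul_fromCols, fromCols_mul_fromRows, fromCols_mul_fromBlocks,
      fromBlocks_mul_fromRows, fromRows_mul_fromCols, fromRows_add', fromColumns_add',
      fromRows_zero', fromColumns_zero', fromBlocks_add, Matrix.smul_mul, smul_smul,
      fromRows_neg', fromColumns_neg', fromBlocks_neg, Matrix.neg_mul, Matrix.mul_neg,
      mul_one, mul_neg_one, neg_smul, mul_invOf_two_smul, invOf_mul_self, mul_invOf_self,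
      half_smul_add_half_smul, smul_fromRows, smul_fromColumns, fromColumns_fromRows_fromRows, fromColumns_fromRows_zero, fromColumns_zero_fromRows, fromRows_fromColumns_fromColumns, fromRows_fromColumns_zero, fromRows_zero_fromColumns, ← fromBlocks_one]

end Comp

/-- `δ · ι(g,g) · δ⁻¹` lies in the Siegel parabolic `P` of `H`,
i.e. its lower-left `n×n` block vanishes. -/
theorem delta_conjugate_in_Siegel_parabolic {m r : ℕ} (ε : D) (hε : ε = 1 ∨ ε = -1)
    [Invertible (2 : D)] (θ : Matrix (Fin r) (Fin r) D) [Invertible θ]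
    (hθ : θᴴ = ε • θ)
    (Rinv : Matrix (Bidx m r ⊕ Bidx m r) (Aidx m r ⊕ Aidx m r) D)
    (hR₁ : Rmat (m := m) ε θ * Rinv = 1) (hR₂ : Rinv * Rmat (m := m) ε θ = 1)
    (δinv : Matrix (Aidx m r ⊕ Aidx m r) (Aidx m r ⊕ Aidx m r) D)
    (hδ₁ : deltaMat (m := m) (r := r) ε * δinv = 1)
    (hδ₂ : δinv * deltaMat (m := m) (r := r) ε = 1)
    (g : Matrix (Bidx m r) (Bidx m r) D) (hg : IsUnit g)
    (hG : g * PhiMat ε θ * gᴴ = PhiMat ε θ) :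
    ∀ (i : Aidx m r) (j : Aidx m r),
      (deltaMat (m := m) (r := r) ε * (Rmat (m := m) ε θ * fromBlocks g 0 0 g * Rinv) * δinv)
        (Sum.inr i) (Sum.inl j) = 0 := by
  intro i j
  have hSR : deltaMat (m := m) (r := r) ε * Rmat (m := m) ε θ =
      fromBlocks (S11mat m r ε) (S12mat m r ε) (Kmat m θ) (-(Kmat m θ)) :=
    deltaR_eq ε hε θ
  have hST := ST_eq (m := m) ε hε θ
  have h2 : (Rinv * δinv) *
      fromBlocks (S11mat m r ε) (S12mat m r ε) (Kmat m θ) (-(Kmat m θ)) = 1 := by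
    rw [← hSR, Matrix.mul_assoc, ← Matrix.mul_assoc δinv, hδ₂, Matrix.one_mul, hR₂]
  have hT : Rinv * δinv = fromBlocks (Vmat m r ε) (Wmat m θ) (Vmat m r ε) (Wmat' m θ) := by
    calc Rinv * δinv = (Rinv * δinv) *
        (fromBlocks (S11mat m r ε) (S12mat m r ε) (Kmat m θ) (-(Kmat m θ)) *
          fromBlocks (Vmat m r ε) (Wmat m θ) (Vmat m r ε) (Wmat' m θ)) := by
          rw [hST, Matrix.mul_one]
      _ = _ := by rw [← Matrix.mul_assoc, h2, Matrix.one_mul]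
  have key : deltaMat (m := m) (r := r) ε * (Rmat (m := m) ε θ * fromBlocks g 0 0 g * Rinv) * δinv =
      fromBlocks (S11mat m r ε) (S12mat m r ε) (Kmat m θ) (-(Kmat m θ)) *
        fromBlocks g 0 0 g *
        fromBlocks (Vmat m r ε) (Wmat m θ) (Vmat m r ε) (Wmat' m θ) := by
    rw [← hSR, ← hT]
    simp only [Matrix.mul_assoc]
  rw [key, fromBlocks_multiply, fromBlocks_multiply]
  simp [Matrix.neg_mul]


end Stmt3
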